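/- For any n ≥ 1 and p ∈ (0,1), if S ~ Binomial(n,p) and m is an integer with m ≥ np, then P(S ≤ m) ≥ 1/2. -/

import Mathlib

/-- pmf of the Binomial(n,p) distribution. -/
noncomputable def binomPMF (n : ℕ) (p : ℝ) (s : ℕ) : ℝ :=
  (n.choose s : ℝ) * p ^ s * (1 - p) ^ (n - s)

/-- CDF of the Binomial(n,p) distribution: P(S ≤ m). -/
noncomputable def binomCDF (n : ℕ) (p : ℝ) (m : ℕ) : ℝ :=
  ∑ s ∈ Finset.range (m + 1), binomPMF n p s

lemma nat_idA (N k : ℕ) : (k + 1) * (N + 1).choose (k + 1) = (N + 1) * N.choose k := by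
  have h := Nat.add_one_mul_choose_eq N k
  rw [h]; exact mul_comm _ _

lemma nat_idB (N k : ℕ) : (N - k) * (N + 1).choose (k + 1) = (N + 1) * N.choose (k + 1) := by
  have h3 := Nat.choose_succ_right_eq (N + 1) (k + 1)
  have h4 := Nat.add_one_mul_choose_eq N (k + 1)
  have hs : N + 1 - (k + 1) = N - k := by omega
  rw [hs] at h3
  calc (N - k) * (N + 1).choose (k + 1) = (N + 1).choose (k + 1) * (N - k) := mul_comm _ _
    _ = (N + 1).choose (k + 1 + 1) * (k + 1 + 1) := h3.symm
    _ = (N + 1) * N.choose (k + 1) := h4.symm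

lemma hasDerivAt_aux (a b : ℕ) (x : ℝ) :
    HasDerivAt (fun y : ℝ => y ^ a * (1 - y) ^ b)
      ((a : ℝ) * x ^ (a - 1) * (1 - x) ^ b - (b : ℝ) * (x ^ a * (1 - x) ^ (b - 1))) x := by
  have h3 : HasDerivAt (fun y : ℝ => 1 - y) (-1) x := by
    exact ((hasDerivAt_const x (1 : ℝ)).sub (hasDerivAt_id x)).congr_deriv (by ring)
  have h2 : HasDerivAt (fun y : ℝ => (1 - y) ^ b) (-((b : ℝ) * (1 - x) ^ (b - 1))) x := by
    exact ((hasDerivAt_pow b (1 - x)).comp x h3).congr_deriv (by ring)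
  have h1 : HasDerivAt (fun y : ℝ => y ^ a) ((a : ℝ) * x ^ (a - 1)) x := hasDerivAt_pow a x
  have := h1.mul h2
  exact this.congr_deriv (by ring)

lemma cdf_hasDerivAt' (m : ℕ) : ∀ r : ℕ, ∀ x : ℝ,
    HasDerivAt (fun y => binomCDF (m + 1 + r) y m)
      (-(((m + 1 + r) * (m + r).choose m : ℕ) : ℝ) * x ^ m * (1 - x) ^ r) x := by
  induction m with
  | zero =>
    intro r x
    have hfun : (fun y : ℝ => binomCDF (0 + 1 + r) y 0) = fun y : ℝ => y ^ 0 * (1 - y) ^ (r + 1) := by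
      funext y
      simp [binomCDF, binomPMF]
      ring
    rw [hfun]
    have := hasDerivAt_aux 0 (r + 1) x
    convert this using 1
    push_cast [Nat.choose_zero_right]
    ring
  | succ m ih =>
    intro r x
    have hfun : (fun y : ℝ => binomCDF (m + 1 + 1 + r) y (m + 1)) =
        fun y : ℝ => binomCDF (m + 1 + 1 + r) y m
          + ((m + 1 + 1 + r).choose (m + 1) : ℝ) * (y ^ (m + 1) * (1 - y) ^ (r + 1)) := by
      funext y
      rw [binomCDF, binomCDF, Finset.sum_range_succ]
      congr 1
      rw [binomPMF, show (m + 1 + 1 + r) - (m + 1) = r + 1 by omega]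
      ring
    rw [hfun]
    have h1 := ih (r + 1) x
    rw [show m + 1 + (r + 1) = m + 1 + 1 + r by omega, show m + (r + 1) = m + 1 + r by omega] at h1
    have h2 := (hasDerivAt_aux (m + 1) (r + 1) x).const_mul (((m + 1 + 1 + r).choose (m + 1) : ℝ))
    have hsum := h1.add h2
    refine hsum.congr_deriv (Eq.symm ?_)
    have idA : (m + 1) * (m + 1 + 1 + r).choose (m + 1) = (m + 1 + 1 + r) * (m + 1 + r).choose m := by
      have := nat_idA (m + 1 + r) m
      rw [show m + 1 + r + 1 = m + 1 + 1 + r by ring] at this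
      exact this
    have idB : (r + 1) * (m + 1 + 1 + r).choose (m + 1) = (m + 1 + 1 + r) * (m + 1 + r).choose (m + 1) := by
      have := nat_idB (m + 1 + r) m
      rw [show m + 1 + r + 1 = m + 1 + 1 + r by omega, show m + 1 + r - m = r + 1 by omega] at this
      exact this
    have idA' : ((m : ℝ) + 1) * ((m + 1 + 1 + r).choose (m + 1) : ℝ)
        = ((m + 1 + 1 + r : ℕ) : ℝ) * ((m + 1 + r).choose m : ℝ) := by exact_mod_cast congrArg (Nat.cast (R := ℝ)) idA
    have idB' : ((r : ℝ) + 1) * ((m + 1 + 1 + r).choose (m + 1) : ℝ)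
        = ((m + 1 + 1 + r : ℕ) : ℝ) * ((m + 1 + r).choose (m + 1) : ℝ) := by exact_mod_cast congrArg (Nat.cast (R := ℝ)) idB
    simp only [Nat.add_sub_cancel]
    push_cast
    push_cast at idA' idB'
    linear_combination (x ^ (m + 1) * (1 - x) ^ r) * idB' - (x ^ m * (1 - x) ^ (r + 1)) * idA'

lemma cdf_hasDerivAt (n m r : ℕ) (h : m + 1 + r = n) (x : ℝ) :
    HasDerivAt (fun y => binomCDF n y m)
      (-((n * (n - 1).choose m : ℕ) : ℝ) * x ^ m * (1 - x) ^ r) x := by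
  subst h
  have := cdf_hasDerivAt' m r x
  rw [show m + 1 + r - 1 = m + r by omega]
  exact this

lemma cdf_zero (n m : ℕ) : binomCDF n 0 m = 1 := by
  rw [binomCDF, Finset.sum_eq_single 0]
  · simp [binomPMF]
  · intro s _ hs
    simp [binomPMF, zero_pow hs]
  · simp

lemma cdf_one (n m : ℕ) (h : m < n) : binomCDF n 1 m = 0 := by
  rw [binomCDF]
  apply Finset.sum_eq_zero
  intro s hs
  rw [binomPMF]
  have hns : n - s ≠ 0 := by
    simp only [Finset.mem_range] at hs
    omega
  simp [hns]

lemma pmf_sum_total (n : ℕ) (p : ℝ) : ∑ s ∈ Finset.range (n + 1), binomPMF n p s = 1 := by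
  have h := add_pow p (1 - p) n
  have h2 : ∑ s ∈ Finset.range (n + 1), binomPMF n p s = (p + (1 - p)) ^ n := by
    rw [h]
    apply Finset.sum_congr rfl
    intro k _
    rw [binomPMF]
    ring
  rw [h2]
  norm_num

lemma cdf_of_le (n m : ℕ) (p : ℝ) (h : n ≤ m) : binomCDF n p m = 1 := by
  have hsub : Finset.range (n + 1) ⊆ Finset.range (m + 1) := Finset.range_subset_range.mpr (by omega)
  have hz : ∀ s ∈ Finset.range (m + 1), s ∉ Finset.range (n + 1) → binomPMF n p s = 0 := by
    intro s _ hs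
    simp only [Finset.mem_range, not_lt] at hs
    rw [binomPMF, Nat.choose_eq_zero_of_lt (by omega)]
    simp
  rw [binomCDF, ← Finset.sum_subset hsub hz, pmf_sum_total]

lemma cdf_rep (n m r : ℕ) (h : m + 1 + r = n) (p : ℝ) :
    binomCDF n p m = 1 - ((n * (n - 1).choose m : ℕ) : ℝ) * ∫ t in (0:ℝ)..p, t ^ m * (1 - t) ^ r := by
  set c : ℝ := ((n * (n - 1).choose m : ℕ) : ℝ) with hc
  have hcont : Continuous (fun t : ℝ => -c * t ^ m * (1 - t) ^ r) := by
    apply Continuous.mul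
    · exact continuous_const.mul (continuous_pow m)
    · exact ((continuous_const.sub continuous_id).pow r)
  have hftc := intervalIntegral.integral_eq_sub_of_hasDerivAt
    (f := fun y => binomCDF n y m) (f' := fun t => -c * t ^ m * (1 - t) ^ r)
    (fun t _ => cdf_hasDerivAt n m r h t)
    (hcont.intervalIntegrable 0 p)
  simp only [cdf_zero] at hftc
  have heq : (∫ t in (0:ℝ)..p, -c * t ^ m * (1 - t) ^ r)
      = -c * ∫ t in (0:ℝ)..p, t ^ m * (1 - t) ^ r := by
    rw [← intervalIntegral.integral_const_mul]
    apply intervalIntegral.integral_congr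
    intro t _
    ring
  rw [heq] at hftc
  linarith

lemma int_scalar (a m t : ℤ) (ha : t + 2 ≤ a) (h2 : a ≤ m + 1) (ht : 0 ≤ t) (hm : t + 1 ≤ m) :
    (a - t - 1) * (a + t + 1) * m ^ 2 ≤ (m - t) * (m + t + 2) * a ^ 2 := by
  rcases le_or_gt a m with hcase | hcase
  · have k1 : a ^ 2 ≤ m ^ 2 := by nlinarith
    have k2 : (t + 1) ^ 2 * a ^ 2 ≤ (t + 1) ^ 2 * m ^ 2 := by nlinarith [sq_nonneg (t + 1)]
    nlinarith [k2, sq_nonneg a]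
  · have ha1 : a = m + 1 := by omega
    subst ha1
    have k1 : (t + 1) ^ 2 ≤ (m + 1) ^ 2 := by nlinarith
    nlinarith [k1]

-- the scalar inequality
lemma scalar_ineq (n m t : ℕ) (hm : 1 ≤ m) (hmn : m < n) (hreg : n ≤ 2 * m + 1)
    (ht : t + 1 ≤ n - m - 1) :
    (n - m - t - 1) * (n - m + t + 1) * m ^ 2 ≤ (m - t) * (m + t + 2) * (n - m) ^ 2 := by
  have h1 : t + 1 ≤ m := by omega
  have h2 : n - m ≤ m + 1 := by omega
  have h3 : t + 2 ≤ n - m := by omega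
  -- set a = n - m, u = t+1, with 1 ≤ u ≤ a - 1, a ≤ m + 1
  have key := int_scalar ((n : ℤ) - m) m t (by omega) (by omega) (by omega) (by omega)
  zify [show t ≤ m from by omega, show m ≤ n from hmn.le, show t ≤ n - m from by omega,
    show 1 ≤ n - m - t from by omega]
  calc ((n : ℤ) - m - t - 1) * (n - m + t + 1) * (m : ℤ) ^ 2
      = ((n : ℤ) - m - t - 1) * ((n : ℤ) - m + t + 1) * (m : ℤ) ^ 2 := by ring
    _ ≤ ((m : ℤ) - t) * (m + t + 2) * ((n : ℤ) - m) ^ 2 := key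
    _ = ((m : ℤ) - t) * (m + t + 2) * ((n : ℤ) - m) ^ 2 := by ring

-- nat pairing lemma
lemma natpair (n m : ℕ) (hm : 1 ≤ m) (hmn : m < n) (hreg : n ≤ 2 * m + 1) :
    ∀ t, t ≤ n - m - 1 →
      n.choose (m + 1 + t) * m ^ (2 * t + 1) ≤ n.choose (m - t) * (n - m) ^ (2 * t + 1) := by
  intro t
  induction t with
  | zero =>
    intro _
    have h := Nat.choose_succ_right_eq n m
    simp only [Nat.mul_zero, Nat.zero_add, pow_one, Nat.add_zero, Nat.sub_zero]
    calc n.choose (m + 1) * m ≤ n.choose (m + 1) * (m + 1) := by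
          exact Nat.mul_le_mul_left _ (by omega)
      _ = n.choose m * (n - m) := h
  | succ t ih =>
    intro ht
    have ih' := ih (by omega)
    have h1t : t + 1 ≤ m := by omega
    -- identities
    have e1 : n.choose (m - t) * (m - t) = n.choose (m - t - 1) * (n - m + t + 1) := by
      have := Nat.choose_succ_right_eq n (m - t - 1)
      rw [show m - t - 1 + 1 = m - t by omega] at this
      rw [this, show n - (m - t - 1) = n - m + t + 1 by omega]
    have e2 : n.choose (m + 1 + t + 1) * (m + t + 2) = n.choose (m + 1 + t) * (n - m - t - 1) := by
      have h := Nat.choose_succ_right_eq n (m + 1 + t)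
      rw [show n - (m + 1 + t) = n - m - t - 1 by omega,
        show m + 1 + t + 1 = m + t + 2 by omega] at h
      rw [show m + 1 + t + 1 = m + t + 2 by omega]
      exact h
    have hs := scalar_ineq n m t hm hmn hreg (by omega)
    -- multiply ih' by hs
    have key : (n.choose (m + 1 + t) * m ^ (2 * t + 1)) * ((n - m - t - 1) * (n - m + t + 1) * m ^ 2)
        ≤ (n.choose (m - t) * (n - m) ^ (2 * t + 1)) * ((m - t) * (m + t + 2) * (n - m) ^ 2) :=
      Nat.mul_le_mul ih' hs
    -- rearrange into goal * ((n - m + t + 1) * (m + t + 2))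
    have lhs_eq : (n.choose (m + 1 + t) * m ^ (2 * t + 1)) * ((n - m - t - 1) * (n - m + t + 1) * m ^ 2)
        = (n.choose (m + 1 + (t + 1)) * m ^ (2 * (t + 1) + 1)) * ((n - m + t + 1) * (m + t + 2)) := by
      rw [show m + 1 + (t + 1) = m + 1 + t + 1 by omega]
      calc (n.choose (m + 1 + t) * m ^ (2 * t + 1)) * ((n - m - t - 1) * (n - m + t + 1) * m ^ 2)
          = (n.choose (m + 1 + t) * (n - m - t - 1)) * (m ^ (2 * t + 1) * m ^ 2) * (n - m + t + 1) := by ring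
        _ = (n.choose (m + 1 + t + 1) * (m + t + 2)) * m ^ (2 * (t + 1) + 1) * (n - m + t + 1) := by
            rw [← e2, ← pow_add]; ring_nf
        _ = (n.choose (m + 1 + t + 1) * m ^ (2 * (t + 1) + 1)) * ((n - m + t + 1) * (m + t + 2)) := by ring
    have rhs_eq : (n.choose (m - t) * (n - m) ^ (2 * t + 1)) * ((m - t) * (m + t + 2) * (n - m) ^ 2)
        = (n.choose (m - (t + 1)) * (n - m) ^ (2 * (t + 1) + 1)) * ((n - m + t + 1) * (m + t + 2)) := by
      rw [show m - (t + 1) = m - t - 1 by omega]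
      calc (n.choose (m - t) * (n - m) ^ (2 * t + 1)) * ((m - t) * (m + t + 2) * (n - m) ^ 2)
          = (n.choose (m - t) * (m - t)) * ((n - m) ^ (2 * t + 1) * (n - m) ^ 2) * (m + t + 2) := by ring
        _ = (n.choose (m - t - 1) * (n - m + t + 1)) * (n - m) ^ (2 * (t + 1) + 1) * (m + t + 2) := by
            rw [e1, ← pow_add]; ring_nf
        _ = (n.choose (m - t - 1) * (n - m) ^ (2 * (t + 1) + 1)) * ((n - m + t + 1) * (m + t + 2)) := by ring
    rw [lhs_eq, rhs_eq] at key
    exact Nat.le_of_mul_le_mul_right key (by positivity)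

lemma pmf_rat (n m s : ℕ) (hn : 1 ≤ n) (hmn : m ≤ n) (hs : s ≤ n) :
    binomPMF n ((m : ℝ) / n) s = ((n.choose s * m ^ s * (n - m) ^ (n - s) : ℕ) : ℝ) / (n : ℝ) ^ n := by
  have hn0 : (0 : ℝ) < n := by exact_mod_cast hn
  have h1q : 1 - (m : ℝ) / n = ((n - m : ℕ) : ℝ) / n := by
    rw [Nat.cast_sub hmn]
    field_simp
  rw [binomPMF, h1q, div_pow, div_pow, mul_assoc, div_mul_div_comm, ← pow_add,
    show s + (n - s) = n by omega]
  push_cast [Nat.cast_sub hmn]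
  ring

lemma pmf_nonneg (n : ℕ) (p : ℝ) (s : ℕ) (h0 : 0 ≤ p) (h1 : p ≤ 1) : 0 ≤ binomPMF n p s := by
  rw [binomPMF]
  have : (0:ℝ) ≤ 1 - p := by linarith
  positivity

lemma pair_le (n m t : ℕ) (hm : 1 ≤ m) (hmn : m < n) (hreg : n ≤ 2 * m + 1)
    (ht : t ≤ n - m - 1) :
    binomPMF n ((m : ℝ) / n) (m + 1 + t) ≤ binomPMF n ((m : ℝ) / n) (m - t) := by
  have hn : 1 ≤ n := by omega
  have keynat : n.choose (m + 1 + t) * m ^ (m + 1 + t) * (n - m) ^ (n - (m + 1 + t))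
      ≤ n.choose (m - t) * m ^ (m - t) * (n - m) ^ (n - (m - t)) := by
    have h := Nat.mul_le_mul_right (m ^ (m - t) * (n - m) ^ (n - m - 1 - t)) (natpair n m hm hmn hreg t ht)
    calc n.choose (m + 1 + t) * m ^ (m + 1 + t) * (n - m) ^ (n - (m + 1 + t))
        = n.choose (m + 1 + t) * m ^ (2 * t + 1) * (m ^ (m - t) * (n - m) ^ (n - m - 1 - t)) := by
          have hpow : m ^ (m + 1 + t) = m ^ (2 * t + 1) * m ^ (m - t) := by
            rw [← pow_add]; congr 1; omega
          rw [show n - (m + 1 + t) = n - m - 1 - t by omega, hpow]; ring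
      _ ≤ n.choose (m - t) * (n - m) ^ (2 * t + 1) * (m ^ (m - t) * (n - m) ^ (n - m - 1 - t)) := h
      _ = n.choose (m - t) * m ^ (m - t) * (n - m) ^ (n - (m - t)) := by
          have hpow : (n - m) ^ (n - m + t) = (n - m) ^ (2 * t + 1) * (n - m) ^ (n - m - 1 - t) := by
            rw [← pow_add]; congr 1; omega
          rw [show n - (m - t) = n - m + t by omega, hpow]; ring
  rw [pmf_rat n m (m + 1 + t) hn hmn.le (by omega), pmf_rat n m (m - t) hn hmn.le (by omega)]
  have hden : (0:ℝ) < (n:ℝ)^n := by positivity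
  have hcast : ((n.choose (m+1+t) * m^(m+1+t) * (n-m)^(n-(m+1+t)) : ℕ) : ℝ)
      ≤ ((n.choose (m-t) * m^(m-t) * (n-m)^(n-(m-t)) : ℕ) : ℝ) := by exact_mod_cast keynat
  exact div_le_div_of_nonneg_right hcast hden.le

lemma regime1 (n m : ℕ) (hm : 1 ≤ m) (hmn : m < n) (hreg : n ≤ 2 * m + 1) :
    1 / 2 ≤ binomCDF n ((m : ℝ) / n) m := by
  set q : ℝ := (m : ℝ) / n with hq
  have hq0 : 0 ≤ q := by positivity
  have hq1 : q ≤ 1 := by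
    rw [hq, div_le_one (by exact_mod_cast Nat.lt_of_lt_of_le Nat.zero_lt_one (by omega : 1 ≤ n))]
    exact_mod_cast hmn.le
  have htot := pmf_sum_total n q
  have hsplit : ∑ s ∈ Finset.range (n + 1), binomPMF n q s
      = binomCDF n q m + ∑ s ∈ Finset.Ico (m + 1) (n + 1), binomPMF n q s := by
    rw [binomCDF, Finset.range_eq_Ico,
      ← Finset.sum_Ico_consecutive _ (by omega : 0 ≤ m + 1) (by omega : m + 1 ≤ n + 1), Finset.range_eq_Ico]
  have htail1 : ∑ s ∈ Finset.Ico (m + 1) (n + 1), binomPMF n q s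
      = ∑ t ∈ Finset.range (n - m), binomPMF n q (m + 1 + t) := by
    rw [Finset.sum_Ico_eq_sum_range, show n + 1 - (m + 1) = n - m from by omega]
  have htail2 : ∑ t ∈ Finset.range (n - m), binomPMF n q (m + 1 + t)
      ≤ ∑ t ∈ Finset.range (n - m), binomPMF n q (m - t) := by
    apply Finset.sum_le_sum
    intro t htmem
    simp only [Finset.mem_range] at htmem
    exact pair_le n m t hm hmn hreg (by omega)
  have htail3 : ∑ t ∈ Finset.range (n - m), binomPMF n q (m - t) ≤ binomCDF n q m := by
    rw [binomCDF]
    have himg : ∑ t ∈ Finset.range (n - m), binomPMF n q (m - t)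
        = ∑ s ∈ (Finset.range (n - m)).image (fun t => m - t), binomPMF n q s := by
      rw [Finset.sum_image]
      intro x hx y hy hxy
      simp only [Finset.mem_coe, Finset.mem_range] at hx hy hxy
      omega
    rw [himg]
    apply Finset.sum_le_sum_of_subset_of_nonneg
    · intro s hs
      simp only [Finset.mem_image, Finset.mem_range] at hs
      obtain ⟨t, _, rfl⟩ := hs
      simp only [Finset.mem_range]
      omega
    · intro s _ _
      exact pmf_nonneg n q s hq0 hq1
  linarith

lemma reflect_pt (m r : ℕ) (hm : 1 ≤ m) (q : ℝ) (hq0 : 0 < q) (hq2 : q ≤ 1 / 2)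
    (hcond : (r : ℝ) * q ≤ (m : ℝ) * (1 - q)) :
    ∀ s ∈ Set.Icc (0 : ℝ) q, (q - s) ^ m * (1 - (q - s)) ^ r ≤ (q + s) ^ m * (1 - (q + s)) ^ r := by
  intro s hs
  obtain ⟨hs0, hsq⟩ := hs
  rcases eq_or_lt_of_le hsq with heq | hlt
  · have h1 : q - s = 0 := by rw [heq]; ring
    rw [h1, zero_pow (by omega : m ≠ 0), zero_mul]
    have h2 : (0:ℝ) ≤ 1 - (q + s) := by rw [heq]; linarith
    exact mul_nonneg (pow_nonneg (by linarith) m) (pow_nonneg h2 r)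
  -- s < q
  set H : ℝ → ℝ := fun s => m * Real.log (q + s) + r * Real.log (1 - q - s)
      - m * Real.log (q - s) - r * Real.log (1 - q + s) with hH
  have hderiv : ∀ x ∈ Set.Ioo (0:ℝ) q, HasDerivAt H
      (m * (1 / (q + x)) - r * (1 / (1 - q - x)) + m * (1 / (q - x)) - r * (1 / (1 - q + x))) x := by
    intro x hx
    obtain ⟨hx0, hxq⟩ := hx
    have hqx1 : (0:ℝ) < q + x := by linarith
    have hqx2 : (0:ℝ) < 1 - q - x := by linarith
    have hqx3 : (0:ℝ) < q - x := by linarith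
    have hqx4 : (0:ℝ) < 1 - q + x := by linarith
    have d1 : HasDerivAt (fun y : ℝ => q + y) 1 x := by
      simpa using (hasDerivAt_id x).const_add q
    have d2 : HasDerivAt (fun y : ℝ => 1 - q - y) (-1) x := by
      simpa using ((hasDerivAt_id x).const_sub (1 - q))
    have d3 : HasDerivAt (fun y : ℝ => q - y) (-1) x := by
      simpa using ((hasDerivAt_id x).const_sub q)
    have d4 : HasDerivAt (fun y : ℝ => 1 - q + y) 1 x := by
      simpa using (hasDerivAt_id x).const_add (1 - q)
    have l1 := (d1.log (ne_of_gt hqx1)).const_mul (m : ℝ)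
    have l2 := (d2.log (ne_of_gt hqx2)).const_mul (r : ℝ)
    have l3 := (d3.log (ne_of_gt hqx3)).const_mul (m : ℝ)
    have l4 := (d4.log (ne_of_gt hqx4)).const_mul (r : ℝ)
    have := ((l1.add l2).sub l3).sub l4
    exact this.congr_deriv (by ring)
  have hderiv_nonneg : ∀ x ∈ Set.Ioo (0:ℝ) q,
      0 ≤ m * (1 / (q + x)) - r * (1 / (1 - q - x)) + m * (1 / (q - x)) - r * (1 / (1 - q + x)) := by
    intro x hx
    obtain ⟨hx0, hxq⟩ := hx
    have hqx1 : (0:ℝ) < q + x := by linarith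
    have hqx2 : (0:ℝ) < 1 - q - x := by linarith
    have hqx3 : (0:ℝ) < q - x := by linarith
    have hqx4 : (0:ℝ) < 1 - q + x := by linarith
    have e1 : (m:ℝ) * (1 / (q + x)) + m * (1 / (q - x)) = 2 * m * q / ((q + x) * (q - x)) := by
      field_simp
      ring
    have e2 : (r:ℝ) * (1 / (1 - q - x)) + r * (1 / (1 - q + x))
        = 2 * r * (1 - q) / ((1 - q - x) * (1 - q + x)) := by
      field_simp
      ring
    have key : 2 * r * (1 - q) / ((1 - q - x) * (1 - q + x)) ≤ 2 * m * q / ((q + x) * (q - x)) := by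
      rw [div_le_div_iff₀ (by positivity) (by positivity)]
      -- 2r(1-q) (q+x)(q-x) ≤ 2mq (1-q-x)(1-q+x)
      rcases le_total ((m:ℝ) * q) ((r:ℝ) * (1 - q)) with hb | hb
      · nlinarith [mul_nonneg (mul_nonneg hq0.le (by linarith : (0:ℝ) ≤ 1 - q)) (by linarith : (0:ℝ) ≤ (m:ℝ) * (1 - q) - r * q), sq_nonneg x, mul_nonneg (sq_nonneg x) (by linarith : (0:ℝ) ≤ (r:ℝ) * (1 - q) - m * q)]
      · nlinarith [mul_nonneg (by nlinarith : (0:ℝ) ≤ q*q - x*x) (by linarith : (0:ℝ) ≤ (m:ℝ) * q - r * (1 - q)), mul_nonneg (by positivity : (0:ℝ) ≤ (m:ℝ) * q) (by linarith : (0:ℝ) ≤ 1 - 2*q)]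
    linarith [e1, e2, key]
  have hcont : ContinuousOn H (Set.Ico 0 q) := by
    apply ContinuousOn.sub
    apply ContinuousOn.sub
    apply ContinuousOn.add
    · apply ContinuousOn.mul continuousOn_const
      apply ContinuousOn.log (by fun_prop)
      intro x hx
      obtain ⟨hx0, _⟩ := hx
      positivity
    · apply ContinuousOn.mul continuousOn_const
      apply ContinuousOn.log (by fun_prop)
      intro x hx
      obtain ⟨hx0, hxq⟩ := hx
      have : x < q := hxq
      have : (0:ℝ) < 1 - q - x := by linarith
      linarith
    · apply ContinuousOn.mul continuousOn_const
      apply ContinuousOn.log (by fun_prop)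
      intro x hx
      obtain ⟨hx0, hxq⟩ := hx
      have : (0:ℝ) < q - x := by linarith [hxq]
      linarith
    · apply ContinuousOn.mul continuousOn_const
      apply ContinuousOn.log (by fun_prop)
      intro x hx
      obtain ⟨hx0, _⟩ := hx
      have : (0:ℝ) < 1 - q + x := by linarith
      linarith
  have hmono : MonotoneOn H (Set.Ico 0 q) := by
    apply monotoneOn_of_deriv_nonneg (convex_Ico 0 q) hcont
    · intro x hx
      rw [interior_Ico] at hx
      exact ((hderiv x hx).differentiableAt).differentiableWithinAt
    · intro x hx
      rw [interior_Ico] at hx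
      rw [(hderiv x hx).deriv]
      exact hderiv_nonneg x hx
  have hH0 : H 0 = 0 := by
    rw [hH]
    simp
  have hHs : 0 ≤ H s := by
    have := hmono (Set.mem_Ico.mpr ⟨le_refl 0, hq0⟩) (Set.mem_Ico.mpr ⟨hs0, hlt⟩) hs0
    rw [hH0] at this
    exact this
  -- convert to the inequality
  have hqx1 : (0:ℝ) < q + s := by linarith
  have hqx2 : (0:ℝ) < 1 - q - s := by linarith
  have hqx3 : (0:ℝ) < q - s := by linarith
  have hqx4 : (0:ℝ) < 1 - q + s := by linarith
  have hHs' : 0 ≤ (m:ℝ) * Real.log (q + s) + r * Real.log (1 - q - s)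
      - m * Real.log (q - s) - r * Real.log (1 - q + s) := hHs
  have hlog : Real.log ((q - s) ^ m * (1 - (q - s)) ^ r) ≤ Real.log ((q + s) ^ m * (1 - (q + s)) ^ r) := by
    have h1 : 1 - (q - s) = 1 - q + s := by ring
    have h2 : 1 - (q + s) = 1 - q - s := by ring
    rw [h1, h2, Real.log_mul (pow_ne_zero m (ne_of_gt hqx3)) (pow_ne_zero r (ne_of_gt hqx4)),
      Real.log_mul (pow_ne_zero m (ne_of_gt hqx1)) (pow_ne_zero r (ne_of_gt hqx2)),
      Real.log_pow, Real.log_pow, Real.log_pow, Real.log_pow]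
    push_cast
    linarith [hHs']
  have hL : (0:ℝ) < (q - s) ^ m * (1 - (q - s)) ^ r := by
    have h1 : 1 - (q - s) = 1 - q + s := by ring
    rw [h1]
    positivity
  calc (q - s) ^ m * (1 - (q - s)) ^ r
      = Real.exp (Real.log ((q - s) ^ m * (1 - (q - s)) ^ r)) := (Real.exp_log hL).symm
    _ ≤ Real.exp (Real.log ((q + s) ^ m * (1 - (q + s)) ^ r)) := Real.exp_le_exp.mpr hlog
    _ = (q + s) ^ m * (1 - (q + s)) ^ r := by
        apply Real.exp_log
        have h2 : 1 - (q + s) = 1 - q - s := by ring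
        rw [h2]
        positivity

/-- for n ≥ 1, p ∈ (0,1), S ~ Binomial(n,p) and any integer m ≥ np,
P(S ≤ m) ≥ 1/2 (the median of a binomial distribution is at most ⌈np⌉). -/
theorem binomial_median_le (n : ℕ) (hn : 1 ≤ n) (p : ℝ) (hp0 : 0 < p) (hp1 : p < 1)
    (m : ℕ) (hm : (n : ℝ) * p ≤ (m : ℝ)) :
    1 / 2 ≤ binomCDF n p m := by
  have hn0 : (0:ℝ) < n := by exact_mod_cast hn
  have hm1 : 1 ≤ m := by
    by_contra h
    push_neg at h
    interval_cases m
    · simp at hm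
      nlinarith
  by_cases hcase : n ≤ m
  · rw [cdf_of_le n m p hcase]
    norm_num
  push_neg at hcase
  -- m < n
  set r : ℕ := n - m - 1 with hrdef
  have hmr : m + 1 + r = n := by omega
  set c : ℝ := ((n * (n - 1).choose m : ℕ) : ℝ) with hcdef
  have hc0 : 0 < c := by
    rw [hcdef]
    have h1 : 0 < n * (n - 1).choose m := by
      apply Nat.mul_pos (by omega)
      exact Nat.choose_pos (by omega)
    exact_mod_cast h1
  set f : ℝ → ℝ := fun t => t ^ m * (1 - t) ^ r with hfdef
  have hfc : Continuous f := by
    rw [hfdef]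
    exact (continuous_pow m).mul ((continuous_const.sub continuous_id).pow r)
  have hrep : ∀ x : ℝ, binomCDF n x m = 1 - c * ∫ t in (0:ℝ)..x, f t := fun x => cdf_rep n m r hmr x
  set q : ℝ := (m : ℝ) / n with hqdef
  have hq0 : 0 < q := by positivity
  have hpq : p ≤ q := by
    rw [hqdef, le_div_iff₀ hn0]
    linarith
  have hq1 : q ≤ 1 := by
    rw [hqdef, div_le_one hn0]
    exact_mod_cast hcase.le
  have hfnonneg : ∀ t ∈ Set.Icc (0:ℝ) 1, 0 ≤ f t := by
    intro t ht
    obtain ⟨ht0, ht1⟩ := ht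
    rw [hfdef]
    have : (0:ℝ) ≤ 1 - t := by linarith
    positivity
  have hIpq : (∫ t in (0:ℝ)..p, f t) ≤ ∫ t in (0:ℝ)..q, f t := by
    have hadd := intervalIntegral.integral_add_adjacent_intervals (μ := MeasureTheory.volume)
      (hfc.intervalIntegrable 0 p) (hfc.intervalIntegrable p q)
    have hnn : 0 ≤ ∫ t in p..q, f t := by
      apply intervalIntegral.integral_nonneg hpq
      intro t ht
      exact hfnonneg t ⟨by linarith [ht.1], by linarith [ht.2, hq1]⟩
    linarith
  have hkey : c * (∫ t in (0:ℝ)..q, f t) ≤ 1 / 2 := by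
    by_cases hreg : n ≤ 2 * m + 1
    · have h1 := regime1 n m hm1 hcase hreg
      have h2 := hrep q
      rw [← hqdef] at h1
      rw [h2] at h1
      linarith
    · push_neg at hreg
      have hq2 : q ≤ 1 / 2 := by
        rw [hqdef, div_le_iff₀ hn0]
        have h2m : (2 * (m:ℝ)) ≤ n := by exact_mod_cast (by omega : 2 * m ≤ n)
        linarith
      have h2q1 : 2 * q ≤ 1 := by linarith
      have hcond : (r : ℝ) * q ≤ (m : ℝ) * (1 - q) := by
        have h1mq : 1 - q = ((n - m : ℕ) : ℝ) / n := by
          rw [hqdef, Nat.cast_sub hcase.le]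
          field_simp
        rw [h1mq, hqdef, ← mul_div_assoc, ← mul_div_assoc, div_le_div_iff₀ hn0 hn0]
        have hrnat : (r * m) * n ≤ (m * (n - m)) * n := by
          apply Nat.mul_le_mul_right
          calc r * m = m * r := Nat.mul_comm r m
            _ ≤ m * (n - m) := Nat.mul_le_mul_left m (by omega)
        exact_mod_cast hrnat
      have hrefl := reflect_pt m r hm1 q hq0 hq2 hcond
      have h1 : (∫ t in (0:ℝ)..q, f t) = ∫ s in (0:ℝ)..q, f (q - s) := by
        rw [intervalIntegral.integral_comp_sub_left f q]
        norm_num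
      have h2 : (∫ s in (0:ℝ)..q, f (q - s)) ≤ ∫ s in (0:ℝ)..q, f (q + s) := by
        apply intervalIntegral.integral_mono_on hq0.le
        · exact (hfc.comp (continuous_const.sub continuous_id)).intervalIntegrable 0 q
        · exact (hfc.comp (continuous_const.add continuous_id)).intervalIntegrable 0 q
        · intro s hs
          have := hrefl s hs
          simpa [hfdef] using this
      have h3 : (∫ s in (0:ℝ)..q, f (q + s)) = ∫ t in q..(2*q), f t := by
        have := intervalIntegral.integral_comp_add_left f q (a := (0:ℝ)) (b := q)
        rw [this]
        norm_num
        rw [show q + q = 2 * q by ring]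
      have h4 : (∫ t in q..(2*q), f t) ≤ ∫ t in q..1, f t := by
        have hadd := intervalIntegral.integral_add_adjacent_intervals (μ := MeasureTheory.volume)
          (hfc.intervalIntegrable q (2*q)) (hfc.intervalIntegrable (2*q) 1)
        have hnn : 0 ≤ ∫ t in (2*q)..1, f t := by
          apply intervalIntegral.integral_nonneg h2q1
          intro t ht
          exact hfnonneg t ⟨by linarith [ht.1, hq0], ht.2⟩
        linarith
      have h5 : (∫ t in (0:ℝ)..1, f t) = (∫ t in (0:ℝ)..q, f t) + ∫ t in q..1, f t := by
        exact (intervalIntegral.integral_add_adjacent_intervals (μ := MeasureTheory.volume)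
          (hfc.intervalIntegrable 0 q) (hfc.intervalIntegrable q 1)).symm
      have h6 : c * (∫ t in (0:ℝ)..1, f t) = 1 := by
        have := hrep 1
        rw [cdf_one n m hcase] at this
        linarith
      nlinarith [hc0.le, h1, h2, h3, h4, h5, h6, hIpq]
  have hrepp := hrep p
  have : c * (∫ t in (0:ℝ)..p, f t) ≤ c * (∫ t in (0:ℝ)..q, f t) :=
    mul_le_mul_of_nonneg_left hIpq hc0.le
  rw [hrepp]
  linarith
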